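/- Let B be a symmetric positive semidefinite n × n real matrix and let S be the set of 0-1 indicator matrices F with rows summing to 1. If F̂ maximizes Tr(GᵀBF) over G ∈ S for B' = BF, i.e., F̂ ∈ argmax_{G ∈ S} Tr(Gᵀ B F), then Tr(F̂ᵀ B F̂) ≥ Tr(Fᵀ B F). -/

import Mathlib

open Matrix

lemma trace_conj_nonneg {n K : ℕ} {B : Matrix (Fin n) (Fin n) ℝ}
    (hB : B.PosSemidef) (D : Matrix (Fin n) (Fin K) ℝ) :
    0 ≤ Matrix.trace (Dᵀ * B * D) := by
  rw [Matrix.trace]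
  apply Finset.sum_nonneg
  intro k _
  have h := hB.dotProduct_mulVec_nonneg (fun i => D i k)
  simp only [Matrix.diag, Matrix.mul_apply, dotProduct, Matrix.mulVec,
    Finset.mul_sum, Finset.sum_mul] at h ⊢
  rw [Finset.sum_comm]
  refine h.trans_eq (Finset.sum_congr rfl fun i _ => Finset.sum_congr rfl fun j _ => ?_)
  simp [Matrix.transpose_apply]; ring

theorem mincut_update_increases (n K : ℕ) (B : Matrix (Fin n) (Fin n) ℝ)
    (hB : B.PosSemidef)
    (S : Set (Matrix (Fin n) (Fin K) ℝ))
    (hS : S = {F | (∀ i k, F i k = 0 ∨ F i k = 1) ∧ ∀ i, ∑ k, F i k = 1})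
    (F Fhat : Matrix (Fin n) (Fin K) ℝ) (hF : F ∈ S) (hFhat : Fhat ∈ S)
    (hmax : ∀ G ∈ S, Matrix.trace (Gᵀ * B * F) ≤ Matrix.trace (Fhatᵀ * B * F)) :
    Matrix.trace (Fᵀ * B * F) ≤ Matrix.trace (Fhatᵀ * B * Fhat) := by
  have hBT : Bᵀ = B := by
    have := hB.1
    simpa [Matrix.IsHermitian, Matrix.conjTranspose_eq_transpose_of_trivial] using this
  have h1 : 0 ≤ Matrix.trace ((Fhat - F)ᵀ * B * (Fhat - F)) :=
    trace_conj_nonneg hB (Fhat - F)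
  have h3 : Matrix.trace (Fᵀ * B * Fhat) = Matrix.trace (Fhatᵀ * B * F) := by
    rw [← Matrix.trace_transpose (Fᵀ * B * Fhat)]
    simp [Matrix.transpose_mul, hBT, Matrix.mul_assoc]
  have h2 : Matrix.trace ((Fhat - F)ᵀ * B * (Fhat - F)) =
      Matrix.trace (Fhatᵀ * B * Fhat) - Matrix.trace (Fhatᵀ * B * F)
      - Matrix.trace (Fᵀ * B * Fhat) + Matrix.trace (Fᵀ * B * F) := by
    simp [Matrix.transpose_sub, Matrix.sub_mul, Matrix.mul_sub, Matrix.trace_sub]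
    ring
  have h4 := hmax F hF
  linarith
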